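/- Let k > 0 and σ ∈ [0, k). There is a constant C > 0 such that for every f : ℝ³ → ℂ with Fourier transform f̂ for which ‖f‖_{𝒳^{−1}} and ‖f‖_{𝒳^{k}} are finite, one has ‖f‖_{𝒳^{σ}} ≤ C · ‖f‖_{𝒳^{−1}}^{(k−σ)/(k+1)} · ‖f‖_{𝒳^{k}}^{(σ+1)/(k+1)}. -/

import Mathlib

open MeasureTheory Real
open scoped FourierTransform ENNReal

noncomputable section

/-- The Lei–Lin norm `‖f‖_{𝒳^σ} = ∫_{ℝ³} |ξ|^σ |f̂(ξ)| dξ` of a function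
`f : ℝ³ → ℂ`, expressed via the Fourier transform `𝓕 f`. -/
def leiLinNorm (σ : ℝ) (f : EuclideanSpace ℝ (Fin 3) → ℂ) : ℝ :=
  ∫ ξ : EuclideanSpace ℝ (Fin 3), ‖ξ‖ ^ σ * ‖𝓕 f ξ‖

/-- For `k > 0` and `σ ∈ [0,k)` there is `C > 0` such that for every
`f : ℝ³ → ℂ` with `‖f‖_{𝒳^{-1}}` and `‖f‖_{𝒳^{k}}` finite,
`‖f‖_{𝒳^{σ}} ≤ C ‖f‖_{𝒳^{-1}}^{(k-σ)/(k+1)} ‖f‖_{𝒳^{k}}^{(σ+1)/(k+1)}`. -/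
theorem leiLin_interpolation_neg_one_k (k σ : ℝ) (hk : 0 < k) (hσ1 : 0 ≤ σ) (hσ2 : σ < k) :
    ∃ C > 0, ∀ f : EuclideanSpace ℝ (Fin 3) → ℂ,
      Integrable (fun ξ : EuclideanSpace ℝ (Fin 3) => ‖ξ‖ ^ (-1 : ℝ) * ‖𝓕 f ξ‖) →
      Integrable (fun ξ : EuclideanSpace ℝ (Fin 3) => ‖ξ‖ ^ k * ‖𝓕 f ξ‖) →
      leiLinNorm σ f
        ≤ C * leiLinNorm (-1) f ^ ((k - σ) / (k + 1)) * leiLinNorm k f ^ ((σ + 1) / (k + 1)) := by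
  set θ : ℝ := (k - σ) / (k + 1) with hθdef
  have hk1 : (0:ℝ) < k + 1 := by linarith
  have hθpos : 0 < θ := div_pos (by linarith) hk1
  have hθlt : θ < 1 := by
    rw [hθdef, div_lt_one hk1]; linarith
  have hθ' : 1 - θ = (σ + 1) / (k + 1) := by
    rw [hθdef]; field_simp; ring
  refine ⟨1, one_pos, fun f h1 h2 => ?_⟩
  set g : EuclideanSpace ℝ (Fin 3) → ℝ := fun ξ => ‖𝓕 f ξ‖ with hg
  -- a.e. measurability of g
  have hzero : (fun ξ : EuclideanSpace ℝ (Fin 3) => ξ ≠ 0) =ᵐ[volume] (fun _ => True) := by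
    filter_upwards [compl_mem_ae_iff.2 (measure_singleton (0 : EuclideanSpace ℝ (Fin 3)))]
      with ξ hξ
    simpa using hξ
  have hgm : AEMeasurable g volume := by
    have := h1.aestronglyMeasurable.aemeasurable
    have h' : AEMeasurable (fun ξ : EuclideanSpace ℝ (Fin 3) =>
        ‖ξ‖ * (‖ξ‖ ^ (-1:ℝ) * ‖𝓕 f ξ‖)) volume :=
      (measurable_norm.aemeasurable).mul this
    refine h'.congr ?_
    filter_upwards [hzero] with ξ hξ
    have hξ0 : ξ ≠ 0 := by simpa using hξ
    have hn : (0:ℝ) < ‖ξ‖ := norm_pos_iff.2 hξ0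
    rw [← mul_assoc]
    rw [show ‖ξ‖ * ‖ξ‖ ^ (-1:ℝ) = 1 by
      nth_rewrite 1 [← Real.rpow_one ‖ξ‖]
      rw [← Real.rpow_add hn]; norm_num]
    simp [g]
  have hgnn : ∀ ξ, 0 ≤ g ξ := fun ξ => norm_nonneg _
  set F1 : EuclideanSpace ℝ (Fin 3) → ℝ≥0∞ :=
    fun ξ => ENNReal.ofReal (‖ξ‖ ^ (-1:ℝ) * g ξ) with hF1
  set F2 : EuclideanSpace ℝ (Fin 3) → ℝ≥0∞ :=
    fun ξ => ENNReal.ofReal (‖ξ‖ ^ k * g ξ) with hF2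
  have hF1m : AEMeasurable F1 volume :=
    ENNReal.measurable_ofReal.comp_aemeasurable h1.aestronglyMeasurable.aemeasurable
  have hF2m : AEMeasurable F2 volume :=
    ENNReal.measurable_ofReal.comp_aemeasurable h2.aestronglyMeasurable.aemeasurable
  -- conjugate exponents
  have hpq : Real.HolderConjugate (1/θ) (1/(1-θ)) := by
    rw [Real.holderConjugate_iff]; constructor
    · rw [lt_div_iff₀ hθpos]; linarith
    · rw [one_div, one_div, inv_inv, inv_inv]; ring
  have hol := ENNReal.lintegral_mul_le_Lp_mul_Lq volume hpq
    ((hF1m.pow_const θ)) ((hF2m.pow_const (1-θ)))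
  have hsimp1 : ∀ ξ, (F1 ξ ^ θ) ^ (1/θ) = F1 ξ := by
    intro ξ
    rw [← ENNReal.rpow_mul, mul_one_div, div_self hθpos.ne', ENNReal.rpow_one]
  have hsimp2 : ∀ ξ, (F2 ξ ^ (1-θ)) ^ (1/(1-θ)) = F2 ξ := by
    intro ξ
    rw [← ENNReal.rpow_mul, mul_one_div, div_self (by linarith : (1:ℝ) - θ ≠ 0),
      ENNReal.rpow_one]
  simp only [Pi.mul_apply, hsimp1, hsimp2, one_div_one_div] at hol
  -- pointwise identity a.e.
  have hae : (fun ξ : EuclideanSpace ℝ (Fin 3) => ENNReal.ofReal (‖ξ‖ ^ σ * g ξ))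
      =ᵐ[volume] fun ξ => F1 ξ ^ θ * F2 ξ ^ (1-θ) := by
    filter_upwards [hzero] with ξ hξ
    have hξ0 : ξ ≠ 0 := by simpa using hξ
    have hn : (0:ℝ) < ‖ξ‖ := norm_pos_iff.2 hξ0
    have e1 : F1 ξ ^ θ = ENNReal.ofReal ((‖ξ‖ ^ (-1:ℝ) * g ξ) ^ θ) :=
      ENNReal.ofReal_rpow_of_nonneg
        (mul_nonneg (Real.rpow_nonneg hn.le _) (hgnn ξ)) hθpos.le
    have e2 : F2 ξ ^ (1-θ) = ENNReal.ofReal ((‖ξ‖ ^ k * g ξ) ^ (1-θ)) :=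
      ENNReal.ofReal_rpow_of_nonneg
        (mul_nonneg (Real.rpow_nonneg hn.le _) (hgnn ξ)) (by linarith)
    rw [e1, e2, ← ENNReal.ofReal_mul (Real.rpow_nonneg
      (mul_nonneg (Real.rpow_nonneg hn.le _) (hgnn ξ)) _)]
    congr 1
    rw [Real.mul_rpow (Real.rpow_nonneg hn.le _) (hgnn ξ),
      Real.mul_rpow (Real.rpow_nonneg hn.le _) (hgnn ξ),
      ← Real.rpow_mul hn.le, ← Real.rpow_mul hn.le]
    have hg1 : g ξ ^ θ * g ξ ^ (1-θ) = g ξ := by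
      rw [← Real.rpow_add_of_nonneg (hgnn ξ) hθpos.le (by linarith)]
      simp
    have hx1 : ‖ξ‖ ^ ((-1) * θ) * ‖ξ‖ ^ (k * (1-θ)) = ‖ξ‖ ^ σ := by
      rw [← Real.rpow_add hn]
      congr 1
      rw [hθdef]
      field_simp
      ring
    calc ‖ξ‖ ^ σ * g ξ = (‖ξ‖ ^ ((-1) * θ) * ‖ξ‖ ^ (k * (1-θ))) * (g ξ ^ θ * g ξ ^ (1-θ)) := by
          rw [hg1, hx1]
      _ = ‖ξ‖ ^ ((-1) * θ) * g ξ ^ θ * (‖ξ‖ ^ (k * (1-θ)) * g ξ ^ (1-θ)) := by ring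
  -- convert Bochner integrals to lintegrals
  have hA0 : 0 ≤ leiLinNorm (-1) f :=
    integral_nonneg fun ξ => mul_nonneg (Real.rpow_nonneg (norm_nonneg _) _) (hgnn ξ)
  have hB0 : 0 ≤ leiLinNorm k f :=
    integral_nonneg fun ξ => mul_nonneg (Real.rpow_nonneg (norm_nonneg _) _) (hgnn ξ)
  have hL1 : ∫⁻ ξ, F1 ξ = ENNReal.ofReal (leiLinNorm (-1) f) :=
    (MeasureTheory.ofReal_integral_eq_lintegral_ofReal h1
      (Filter.Eventually.of_forall fun ξ =>
        mul_nonneg (Real.rpow_nonneg (norm_nonneg _) _) (hgnn ξ))).symm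
  have hL2 : ∫⁻ ξ, F2 ξ = ENNReal.ofReal (leiLinNorm k f) :=
    (MeasureTheory.ofReal_integral_eq_lintegral_ofReal h2
      (Filter.Eventually.of_forall fun ξ =>
        mul_nonneg (Real.rpow_nonneg (norm_nonneg _) _) (hgnn ξ))).symm
  have key : (∫⁻ ξ, ENNReal.ofReal (‖ξ‖ ^ σ * g ξ))
      ≤ ENNReal.ofReal (leiLinNorm (-1) f) ^ θ * ENNReal.ofReal (leiLinNorm k f) ^ (1-θ) := by
    rw [lintegral_congr_ae hae]
    calc (∫⁻ ξ, F1 ξ ^ θ * F2 ξ ^ (1-θ))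
        ≤ (∫⁻ ξ, F1 ξ) ^ θ * (∫⁻ ξ, F2 ξ) ^ (1-θ) := hol
      _ = _ := by rw [hL1, hL2]
  have hRHSne : ENNReal.ofReal (leiLinNorm (-1) f) ^ θ
      * ENNReal.ofReal (leiLinNorm k f) ^ (1-θ) ≠ ⊤ := by
    apply ENNReal.mul_ne_top <;>
      exact ENNReal.rpow_ne_top_of_nonneg (by linarith) ENNReal.ofReal_ne_top
  have hmeasσ : AEStronglyMeasurable
      (fun ξ : EuclideanSpace ℝ (Fin 3) => ‖ξ‖ ^ σ * g ξ) volume :=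
    ((measurable_norm.aemeasurable.pow_const σ).mul hgm).aestronglyMeasurable
  have hint : leiLinNorm σ f
      = (∫⁻ ξ, ENNReal.ofReal (‖ξ‖ ^ σ * g ξ)).toReal := by
    rw [leiLinNorm, MeasureTheory.integral_eq_lintegral_of_nonneg_ae
      (Filter.Eventually.of_forall fun ξ =>
        mul_nonneg (Real.rpow_nonneg (norm_nonneg _) _) (hgnn ξ)) hmeasσ]
  rw [hint, one_mul, hθ'.symm]
  calc (∫⁻ ξ, ENNReal.ofReal (‖ξ‖ ^ σ * g ξ)).toReal
      ≤ (ENNReal.ofReal (leiLinNorm (-1) f) ^ θ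
          * ENNReal.ofReal (leiLinNorm k f) ^ (1-θ)).toReal :=
        ENNReal.toReal_mono hRHSne key
    _ = leiLinNorm (-1) f ^ θ * leiLinNorm k f ^ (1-θ) := by
        rw [ENNReal.toReal_mul, ← ENNReal.toReal_rpow, ← ENNReal.toReal_rpow,
          ENNReal.toReal_ofReal hA0, ENNReal.toReal_ofReal hB0]
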